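/- The Boris rotation agrees with the Cayley transform: with t = (h/2)ω, p' = p + p × t, s = 2t/(1+‖t‖²), the vector p + p' × s equals R((h/2)Ω) p, where Ω p = p × ω. -/

import Mathlib

open Matrix
open scoped Matrix

/-- The skew-symmetric matrix of the cross product with `ω`: `Ω.mulVec p = p ×₃ ω`. -/
def OmegaMat (ω : Fin 3 → ℝ) : Matrix (Fin 3) (Fin 3) ℝ :=
  !![0, ω 2, -(ω 1); -(ω 2), 0, ω 0; ω 1, -(ω 0), 0]

/-- The Boris rotation step agrees with the Cayley transform `R((h/2)Ω)`. -/
theorem stmt13 (ω p : Fin 3 → ℝ) (h : ℝ)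
    (t s p' : Fin 3 → ℝ)
    (ht : t = (h / 2) • ω)
    (hp' : p' = p + p ⨯₃ t)
    (hs : s = (2 / (1 + t ⬝ᵥ t)) • t) :
    p + p' ⨯₃ s =
      (((1 : Matrix (Fin 3) (Fin 3) ℝ) - (h / 2) • OmegaMat ω)⁻¹ *
        (1 + (h / 2) • OmegaMat ω)).mulVec p := by
  subst hs hp' ht
  set c := h / 2 with hc
  set A : Matrix (Fin 3) (Fin 3) ℝ := 1 - c • OmegaMat ω with hA
  have hAe : A = !![1, -(c*ω 2), c*ω 1; c*ω 2, 1, -(c*ω 0); -(c*ω 1), c*ω 0, 1] := by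
    rw [hA]
    ext i j
    fin_cases i <;> fin_cases j <;> simp [OmegaMat]
  have hBe : (1 : Matrix (Fin 3) (Fin 3) ℝ) + c • OmegaMat ω =
      !![1, c*ω 2, -(c*ω 1); -(c*ω 2), 1, c*ω 0; c*ω 1, -(c*ω 0), 1] := by
    ext i j
    fin_cases i <;> fin_cases j <;> simp [OmegaMat]
  have hdet : A.det = 1 + c^2 * (ω 0 ^ 2 + ω 1 ^ 2 + ω 2 ^ 2) := by
    rw [hAe, Matrix.det_fin_three]
    simp
    ring
  have hdu : IsUnit A.det := by
    rw [hdet]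
    exact isUnit_iff_ne_zero.2 (by positivity)
  have hdne : (1 + ((c • ω) ⬝ᵥ (c • ω))) ≠ 0 := by
    have : (c • ω) ⬝ᵥ (c • ω) = (c * ω 0)^2 + (c * ω 1)^2 + (c * ω 2)^2 := by
      simp [dotProduct, Fin.sum_univ_three]; ring
    rw [this]
    positivity
  have key : A.mulVec (p + (p + p ⨯₃ (c • ω)) ⨯₃ ((2 / (1 + (c • ω) ⬝ᵥ (c • ω))) • (c • ω)))
      = ((1 : Matrix (Fin 3) (Fin 3) ℝ) + c • OmegaMat ω).mulVec p := by
    rw [hAe, hBe]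
    have hd : (1 + ((c • ω) ⬝ᵥ (c • ω))) = 1 + ((c*ω 0)*(c*ω 0) + (c*ω 1)*(c*ω 1) + (c*ω 2)*(c*ω 2)) := by
      simp [dotProduct, Fin.sum_univ_three]
    have hdne' : (1 + ((c*ω 0)*(c*ω 0) + (c*ω 1)*(c*ω 1) + (c*ω 2)*(c*ω 2))) ≠ 0 := hd ▸ hdne
    funext i
    fin_cases i <;>
    · simp only [hd, Matrix.mulVec, dotProduct, Fin.sum_univ_three, crossProduct,
        Pi.add_apply, Pi.smul_apply, smul_eq_mul, LinearMap.mk₂_apply,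
        Matrix.cons_val', Matrix.cons_val_zero, Matrix.cons_val_one, Matrix.head_cons,
        Matrix.cons_val_two, Matrix.tail_cons, Matrix.head_fin_const,
        Matrix.empty_val', Matrix.cons_val_fin_one,
        Matrix.vecHead, Matrix.vecTail, Function.comp, Fin.succ, Matrix.of_apply,
        Fin.zero_eta, Fin.mk_one, Fin.reduceFinMk, Matrix.cons_val]
      simp
      field_simp
      ring
  calc p + (p + p ⨯₃ (c • ω)) ⨯₃ ((2 / (1 + (c • ω) ⬝ᵥ (c • ω))) • (c • ω))
      = (A⁻¹ * A).mulVec (p + (p + p ⨯₃ (c • ω)) ⨯₃ ((2 / (1 + (c • ω) ⬝ᵥ (c • ω))) • (c • ω))) := by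
        rw [Matrix.nonsing_inv_mul A hdu, Matrix.one_mulVec]
    _ = A⁻¹.mulVec (A.mulVec (p + (p + p ⨯₃ (c • ω)) ⨯₃ ((2 / (1 + (c • ω) ⬝ᵥ (c • ω))) • (c • ω)))) := by
        rw [← Matrix.mulVec_mulVec]
    _ = A⁻¹.mulVec (((1 : Matrix (Fin 3) (Fin 3) ℝ) + c • OmegaMat ω).mulVec p) := by rw [key]
    _ = (A⁻¹ * (1 + c • OmegaMat ω)).mulVec p := by rw [Matrix.mulVec_mulVec]
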